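/- arXiv:2305.00306 — 16 statements merged into one kernel-verified Lean document; each statement's English description precedes it below -/
import Mathlib

section
/- Let ℋ be a nonempty family of nonempty subsets of T, let α be a multifunction, and let M be a nonempty set of multifunctions with M ⊆ N_ℋ(α). Then the pointwise union ⋁_{z∈M} z belongs to N_ℋ(α). -/
open Set

/-- Restriction of a set `F` of functions (elements of `Z`) to the set `A ⊆ T`:
`F|_A = {f|_A : f ∈ F}`. -/
def resSet {T X : Type*} {Z : Set (T → X)} (A : Set T) (F : Set ↥Z) : Set (↥A → X) :=
  (fun h : ↥Z => A.restrict (h : T → X)) '' F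

/-- A multifunction `z : Ω → 𝒫(Z)` is `A`-non-anticipative if `ω|_A = ω'|_A` implies
`z(ω)|_A = z(ω')|_A`. -/
def NonAnt {T X Y : Type*} (Ω : Set (T → Y)) (Z : Set (T → X)) (A : Set T)
    (z : ↥Ω → Set ↥Z) : Prop :=
  ∀ ω ω' : ↥Ω, A.restrict (ω : T → Y) = A.restrict (ω' : T → Y) →
    resSet A (z ω) = resSet A (z ω')

/-- `N_ℋ(α)`: the set of `ℋ`-non-anticipative multiselectors of `α`. -/
def Nna {T X Y : Type*} (Ω : Set (T → Y)) (Z : Set (T → X)) (ℋ : Set (Set T))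
    (α : ↥Ω → Set ↥Z) : Set (↥Ω → Set ↥Z) :=
  {z | (∀ A ∈ ℋ, NonAnt Ω Z A z) ∧ ∀ ω, z ω ⊆ α ω}

/-- `N°_ℋ(α)`: the set of nonempty-valued `ℋ`-non-anticipative multiselectors of `α`. -/
def NnaNE {T X Y : Type*} (Ω : Set (T → Y)) (Z : Set (T → X)) (ℋ : Set (Set T))
    (α : ↥Ω → Set ↥Z) : Set (↥Ω → Set ↥Z) :=
  {z ∈ Nna Ω Z ℋ α | ∀ ω, (z ω).Nonempty}

/-- The operator `Γ_A`:
`Γ_A(α)(ω) = {h ∈ α(ω) : h|_A ∈ ⋂_{ω' ∈ Ω, ω'|_A = ω|_A} α(ω')|_A}`. -/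
def Gamma {T X Y : Type*} (Ω : Set (T → Y)) (Z : Set (T → X)) (A : Set T)
    (α : ↥Ω → Set ↥Z) : ↥Ω → Set ↥Z :=
  fun ω => {h ∈ α ω |
    A.restrict (h : T → X) ∈
      ⋂ ω' ∈ {η : ↥Ω | A.restrict (η : T → Y) = A.restrict (ω : T → Y)}, resSet A (α ω')}

/-- If `M` is a nonempty set of multifunctions with `M ⊆ N_ℋ(α)`,
then the pointwise union `⋁_{z ∈ M} z` belongs to `N_ℋ(α)`. -/
theorem stmt0 {T X Y : Type*} [Nonempty T] [Nonempty X] [Nonempty Y]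
    (Ω : Set (T → Y)) (Z : Set (T → X)) (hΩ : Ω.Nonempty) (hZ : Z.Nonempty)
    (ℋ : Set (Set T)) (hℋ : ℋ.Nonempty) (hℋmem : ∀ A ∈ ℋ, A.Nonempty)
    (α : ↥Ω → Set ↥Z) (M : Set (↥Ω → Set ↥Z)) (hM : M.Nonempty)
    (hMsub : M ⊆ Nna Ω Z ℋ α) :
    (fun ω => ⋃ z ∈ M, z ω) ∈ Nna Ω Z ℋ α := by
  constructor
  · intro A hA ω ω' hωω'
    have : ∀ (η : ↥Ω), resSet A (⋃ z ∈ M, z η) = ⋃ z ∈ M, resSet A (z η) := by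
      intro η
      simp [resSet, image_iUnion]
    rw [this ω, this ω']
    apply iUnion_congr; intro z
    apply iUnion_congr; intro hz
    exact (hMsub hz).1 A hA ω ω' hωω'
  · intro ω h hh
    simp only [mem_iUnion] at hh
    obtain ⟨z, hz, hzh⟩ := hh
    exact (hMsub hz).2 ω hzh
end

section
/- Let ℋ be a nonempty family of nonempty subsets of T, let α be a multifunction, and let M be a nonempty set of multifunctions with M ⊆ N_ℋ(α). If for every ω ∈ Ω there exists z ∈ M with z(ω) ≠ ∅, then the pointwise union ⋁_{z∈M} z belongs to N°_ℋ(α), i.e., it is an ℋ-non-anticipative multiselector of α with nonempty values. -/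
open Set

/-- If `M ⊆ N_ℋ(α)` is nonempty and for every `ω` some `z ∈ M` has `z ω ≠ ∅`,
then the pointwise union `⋁_{z ∈ M} z` belongs to `N°_ℋ(α)`. -/
theorem stmt1 {T X Y : Type*} [Nonempty T] [Nonempty X] [Nonempty Y]
    (Ω : Set (T → Y)) (Z : Set (T → X)) (hΩ : Ω.Nonempty) (hZ : Z.Nonempty)
    (ℋ : Set (Set T)) (hℋ : ℋ.Nonempty) (hℋmem : ∀ A ∈ ℋ, A.Nonempty)
    (α : ↥Ω → Set ↥Z) (M : Set (↥Ω → Set ↥Z)) (hM : M.Nonempty)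
    (hMsub : M ⊆ Nna Ω Z ℋ α)
    (hne : ∀ ω : ↥Ω, ∃ z ∈ M, (z ω).Nonempty) :
    (fun ω => ⋃ z ∈ M, z ω) ∈ NnaNE Ω Z ℋ α := by
  refine ⟨⟨fun A hA ω ω' hωω' => ?_, fun ω h hh => ?_⟩, fun ω => ?_⟩
  · simp only [resSet, image_iUnion]
    congr 1
    ext z
    simp only [mem_iUnion]
    constructor
    all_goals
      rintro ⟨hw, hz⟩
      refine ⟨hw, ?_⟩
      have := (hMsub hw).1 A hA ω ω' hωω'
      simp only [resSet] at this
      first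
       | rw [← this]; exact hz
       | rw [this]; exact hz
  · simp only [mem_iUnion] at hh
    obtain ⟨z, hz, hhz⟩ := hh
    exact (hMsub hz).2 ω hhz
  · obtain ⟨z, hz, x, hx⟩ := hne ω
    exact ⟨x, mem_iUnion₂.2 ⟨z, hz, hx⟩⟩
end

section
/- Let ℋ be a nonempty family of nonempty subsets of T and α a multifunction. Then the pointwise union ⋁_{z ∈ N_ℋ(α)} z belongs to N_ℋ(α) and is the ⊑-greatest element of N_ℋ(α): every z ∈ N_ℋ(α) satisfies z ⊑ ⋁_{z′ ∈ N_ℋ(α)} z′. -/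
open Set

/-- The pointwise union of all elements of `N_ℋ(α)` belongs to `N_ℋ(α)` and is
its `⊑`-greatest element. -/
theorem stmt2 {T X Y : Type*} [Nonempty T] [Nonempty X] [Nonempty Y]
    (Ω : Set (T → Y)) (Z : Set (T → X)) (hΩ : Ω.Nonempty) (hZ : Z.Nonempty)
    (ℋ : Set (Set T)) (hℋ : ℋ.Nonempty) (hℋmem : ∀ A ∈ ℋ, A.Nonempty)
    (α : ↥Ω → Set ↥Z) :
    (fun ω => ⋃ z ∈ Nna Ω Z ℋ α, z ω) ∈ Nna Ω Z ℋ α ∧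
      ∀ z ∈ Nna Ω Z ℋ α, ∀ ω : ↥Ω, z ω ⊆ ⋃ z' ∈ Nna Ω Z ℋ α, z' ω := by
  constructor
  · constructor
    · intro A hA ω ω' hres
      have : ∀ z ∈ Nna Ω Z ℋ α, resSet A (z ω) = resSet A (z ω') :=
        fun z hz => hz.1 A hA ω ω' hres
      simp only [resSet, image_iUnion]
      exact iUnion_congr fun z => iUnion_congr fun hz => this z hz
    · intro ω
      exact iUnion₂_subset fun z hz => hz.2 ω
  · intro z hz ω
    exact subset_iUnion₂ (s := fun z' _ => z' ω) z hz
end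

section
/- For any multifunction α and any partition Δ = {t₀ = τ₀ < τ₁ < ⋯ < τ_n = ϑ} of T, the conditions (α, Δ) are feasible if and only if N°_{ℋ_Δ}(α) ≠ ∅, i.e., if and only if α has an ℋ_Δ-non-anticipative multiselector with nonempty values. -/
open Set

/-- `H_i = [τ₀, τ_i]` (as a subset of `T = [t₀, ϑ]`), for `i = 1, …, n`
(here `i : Fin n` corresponds to the instant `τ (i+1)`). -/
def Hset (t₀ ϑ : ℝ) {n : ℕ} (τ : Fin (n + 1) → ℝ) (i : Fin n) :
    Set ↥(Set.Icc t₀ ϑ) :=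
  {t | (t : ℝ) ≤ τ i.succ}

/-- The family `ℋ_Δ = {H_1, …, H_n}`. -/
def HΔ (t₀ ϑ : ℝ) {n : ℕ} (τ : Fin (n + 1) → ℝ) : Set (Set ↥(Set.Icc t₀ ϑ)) :=
  {S | ∃ i : Fin n, S = Hset t₀ ϑ τ i}

/-- Feasibility of the conditions `(α, Δ)` for the partition
`Δ = {t₀ = τ 0 < τ 1 < ⋯ < τ n = ϑ}`: there is a tuple `φ_1, …, φ_n` of multiselectors of `α`
such that for every `(ω_1,…,ω_n) ∈ Ω_Δ` one has `(φ_1(ω_1),…,φ_n(ω_n)) ∈ Z_Δ`. -/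
def Feasible {X Y : Type*} (t₀ ϑ : ℝ) (Ω : Set (↥(Set.Icc t₀ ϑ) → Y))
    (Z : Set (↥(Set.Icc t₀ ϑ) → X)) (α : ↥Ω → Set ↥Z)
    {n : ℕ} (τ : Fin (n + 1) → ℝ) : Prop :=
  ∃ φ : Fin n → (↥Ω → Set ↥Z),
    (∀ i, ∀ ω, φ i ω ⊆ α ω) ∧
    ∀ ωs : Fin n → ↥Ω,
      (∀ i j : Fin n, (j : ℕ) = (i : ℕ) + 1 →
          (Hset t₀ ϑ τ i).restrict (ωs i).1 = (Hset t₀ ϑ τ i).restrict (ωs j).1) →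
      ((∀ i, (φ i (ωs i)).Nonempty) ∧
        ∀ i j : Fin n, (j : ℕ) = (i : ℕ) + 1 →
          resSet (Hset t₀ ϑ τ i) (φ i (ωs i)) = resSet (Hset t₀ ϑ τ i) (φ j (ωs j)))

lemma resSet_subset_eq {T X : Type*} {Z : Set (T → X)} {A B : Set T} (hAB : A ⊆ B)
    {F G : Set ↥Z} (h : resSet B F = resSet B G) : resSet A F = resSet A G := by
  have key : ∀ F : Set ↥Z, resSet A F =
      (fun g : ↥B → X => fun a : ↥A => g ⟨a.1, hAB a.2⟩) '' resSet B F := by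
    intro F
    unfold resSet
    rw [Set.image_image]
    rfl
  rw [key F, key G, h]

/-- For any multifunction `α` and any partition
`Δ = {t₀ = τ 0 < τ 1 < ⋯ < τ n = ϑ}` of `T = [t₀, ϑ]`, the conditions `(α, Δ)` are feasible
iff `N°_{ℋ_Δ}(α) ≠ ∅`. -/
theorem stmt3 {X Y : Type*} [Nonempty X] [Nonempty Y] (t₀ ϑ : ℝ)
    (Ω : Set (↥(Set.Icc t₀ ϑ) → Y)) (Z : Set (↥(Set.Icc t₀ ϑ) → X))
    (hΩ : Ω.Nonempty) (hZ : Z.Nonempty)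
    (α : ↥Ω → Set ↥Z)
    (n : ℕ) (hn : 1 ≤ n) (τ : Fin (n + 1) → ℝ) (hτ : StrictMono τ)
    (hτ0 : τ 0 = t₀) (hτn : τ (Fin.last n) = ϑ) :
    Feasible t₀ ϑ Ω Z α τ ↔ (NnaNE Ω Z (HΔ t₀ ϑ τ) α).Nonempty := by
  have hmono : ∀ i j : Fin n, (i : ℕ) ≤ (j : ℕ) → Hset t₀ ϑ τ i ⊆ Hset t₀ ϑ τ j := by
    intro i j hij t ht
    exact le_trans ht (hτ.monotone (by rw [Fin.le_def]; simp only [Fin.val_succ]; omega))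
  constructor
  · rintro ⟨φ, hφα, hφ⟩
    set ilast : Fin n := ⟨n - 1, by omega⟩ with hilast
    -- chain lemma
    have chain : ∀ (ωs : Fin n → ↥Ω),
        (∀ i j : Fin n, (j : ℕ) = (i : ℕ) + 1 →
          (Hset t₀ ϑ τ i).restrict (ωs i).1 = (Hset t₀ ϑ τ i).restrict (ωs j).1) →
        ∀ (i : Fin n) (m : ℕ) (hm : m < n), (i : ℕ) ≤ m →
          resSet (Hset t₀ ϑ τ i) (φ i (ωs i)) =
            resSet (Hset t₀ ϑ τ i) (φ ⟨m, hm⟩ (ωs ⟨m, hm⟩)) := by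
      intro ωs hcomp i m
      induction m with
      | zero =>
        intro hm him
        have : i = ⟨0, hm⟩ := Fin.ext (by simp; omega)
        rw [← this]
      | succ m ih =>
        intro hm him
        by_cases hcase : (i : ℕ) = m + 1
        · have : i = ⟨m + 1, hm⟩ := Fin.ext (by simpa using hcase)
          rw [← this]
        · have hm' : m < n := by omega
          have step := (hφ ωs hcomp).2 ⟨m, hm'⟩ ⟨m + 1, hm⟩ rfl
          have step' := resSet_subset_eq (hmono i ⟨m, hm'⟩ (by simp; omega)) step
          rw [ih hm' (by omega), step']
    refine ⟨fun ω => φ ilast ω, ⟨?_, fun ω => hφα ilast ω⟩, ?_⟩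
    · -- non-anticipativity
      rintro A ⟨i, rfl⟩ ω ω' hres
      by_cases hi : (i : ℕ) = n - 1
      · -- then H_i is everything, so ω = ω'
        have hωω' : ω = ω' := by
          apply Subtype.ext
          funext t
          have ht : t ∈ Hset t₀ ϑ τ i := by
            show (t : ℝ) ≤ τ i.succ
            have : i.succ = Fin.last n := by
              apply Fin.ext
              simp [Fin.succ, Fin.last]
              omega
            rw [this, hτn]
            exact t.2.2
          exact congrFun hres ⟨t, ht⟩
        rw [hωω']
      · -- mixed chain
        have hilt : (i : ℕ) < n - 1 := by omega
        set ωs : Fin n → ↥Ω := fun k => if k ≤ i then ω else ω' with hωs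
        have hcomp : ∀ a b : Fin n, (b : ℕ) = (a : ℕ) + 1 →
            (Hset t₀ ϑ τ a).restrict (ωs a).1 = (Hset t₀ ϑ τ a).restrict (ωs b).1 := by
          intro a b hb
          by_cases ha : a ≤ i
          · by_cases hb' : b ≤ i
            · simp [hωs, ha, hb']
            · have hai : a = i := by
                apply Fin.ext
                rw [Fin.le_def] at ha hb'
                omega
              simp only [hωs, if_pos ha, if_neg hb']
              rw [hai]
              exact hres
          · have hb' : ¬ b ≤ i := by
              rw [Fin.le_def] at ha ⊢
              omega
            simp [hωs, ha, hb']
        have e1 := chain (fun _ => ω) (fun _ _ _ => rfl) i (n - 1) (by omega) (by omega)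
        have e2 := chain ωs hcomp i (n - 1) (by omega) (by omega)
        have hωsi : ωs i = ω := by simp [hωs]
        have hωsl : ωs ⟨n - 1, by omega⟩ = ω' := by
          have : ¬ (⟨n - 1, by omega⟩ : Fin n) ≤ i := by
            simp only [Fin.le_def, Fin.val_mk]; omega
          simp [hωs, this]
        rw [hωsi, hωsl] at e2
        exact e1.symm.trans e2
    · -- nonempty values
      intro ω
      exact (hφ (fun _ => ω) (fun _ _ _ => rfl)).1 ilast
  · rintro ⟨z, ⟨hna, hsub⟩, hne⟩
    refine ⟨fun _ => z, fun i => hsub, ?_⟩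
    intro ωs hcomp
    refine ⟨fun i => hne _, ?_⟩
    intro i j hij
    exact hna _ ⟨i, rfl⟩ _ _ (hcomp i j hij)
end

section
/- Let A ⊆ T be nonempty. Then the image of the operator Γ_A (over all multifunctions α) equals the set of all A-non-anticipative multifunctions, and this set also equals the set of fixed points of Γ_A, i.e., the set of multifunctions β with Γ_A(β) = β. -/
open Set

lemma gamma_nonant {T X Y : Type*} (Ω : Set (T → Y)) (Z : Set (T → X)) (A : Set T)
    (α : ↥Ω → Set ↥Z) : NonAnt Ω Z A (Gamma Ω Z A α) := by
  intro ω ω' hωω'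
  have hclass : {η : ↥Ω | A.restrict (η : T → Y) = A.restrict (ω : T → Y)} =
      {η : ↥Ω | A.restrict (η : T → Y) = A.restrict (ω' : T → Y)} := by
    ext η; simp [hωω']
  ext g
  constructor
  · rintro ⟨h, ⟨hαω, hInt⟩, rfl⟩
    have hω' : ω' ∈ {η : ↥Ω | A.restrict (η : T → Y) = A.restrict (ω : T → Y)} := hωω'.symm
    have hmem : A.restrict (h : T → X) ∈ resSet A (α ω') := by
      exact (Set.mem_iInter₂.1 hInt) ω' hω' 
    obtain ⟨h', hh'α, hres⟩ := hmem
    refine ⟨h', ⟨hh'α, ?_⟩, hres⟩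
    simp only at hres
    rw [hres, ← hclass]
    exact hInt
  · rintro ⟨h, ⟨hαω, hInt⟩, rfl⟩
    have hω : ω ∈ {η : ↥Ω | A.restrict (η : T → Y) = A.restrict (ω' : T → Y)} := hωω'
    have hmem : A.restrict (h : T → X) ∈ resSet A (α ω) := by
      exact (Set.mem_iInter₂.1 hInt) ω hω
    obtain ⟨h', hh'α, hres⟩ := hmem
    refine ⟨h', ⟨hh'α, ?_⟩, hres⟩
    simp only at hres
    rw [hres, hclass]
    exact hInt

lemma nonant_fixed {T X Y : Type*} (Ω : Set (T → Y)) (Z : Set (T → X)) (A : Set T)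
    (β : ↥Ω → Set ↥Z) (hβ : NonAnt Ω Z A β) : Gamma Ω Z A β = β := by
  funext ω
  ext h
  constructor
  · rintro ⟨hβω, _⟩; exact hβω
  · intro hβω
    refine ⟨hβω, ?_⟩
    apply Set.mem_biInter
    intro ω' hω'
    rw [hβ ω' ω hω']
    exact ⟨h, hβω, rfl⟩

/-- The image of `Γ_A` equals the set of all `A`-non-anticipative
multifunctions, which also equals the set of fixed points of `Γ_A`. -/
theorem stmt4 {T X Y : Type*} [Nonempty T] [Nonempty X] [Nonempty Y]
    (Ω : Set (T → Y)) (Z : Set (T → X)) (hΩ : Ω.Nonempty) (hZ : Z.Nonempty)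
    (A : Set T) (hA : A.Nonempty) :
    Set.range (Gamma Ω Z A) = {z : ↥Ω → Set ↥Z | NonAnt Ω Z A z} ∧
      {z : ↥Ω → Set ↥Z | NonAnt Ω Z A z} = {β : ↥Ω → Set ↥Z | Gamma Ω Z A β = β} := by
  have h1 : Set.range (Gamma Ω Z A) = {z : ↥Ω → Set ↥Z | NonAnt Ω Z A z} := by
    apply Set.Subset.antisymm
    · rintro z ⟨α, rfl⟩
      exact gamma_nonant Ω Z A α
    · intro z hz
      exact ⟨z, nonant_fixed Ω Z A z hz⟩
  refine ⟨h1, Set.Subset.antisymm ?_ ?_⟩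
  · intro z hz; exact nonant_fixed Ω Z A z hz
  · intro β hβ
    have := gamma_nonant Ω Z A β
    rw [hβ] at this
    exact this
end

section
/- Let A ⊆ T be nonempty and α a multifunction. Then Γ_A(α) is the ⊑-greatest A-non-anticipative multiselector of α: Γ_A(α) ⊑ α, Γ_A(α) is A-non-anticipative, and every A-non-anticipative multifunction β with β ⊑ α satisfies β ⊑ Γ_A(α). -/
open Set

/-- `Γ_A(α)` is the `⊑`-greatest `A`-non-anticipative multiselector of `α`. -/
theorem stmt5 {T X Y : Type*} [Nonempty T] [Nonempty X] [Nonempty Y]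
    (Ω : Set (T → Y)) (Z : Set (T → X)) (hΩ : Ω.Nonempty) (hZ : Z.Nonempty)
    (A : Set T) (hA : A.Nonempty) (α : ↥Ω → Set ↥Z) :
    (∀ ω, Gamma Ω Z A α ω ⊆ α ω) ∧ NonAnt Ω Z A (Gamma Ω Z A α) ∧
      ∀ β : ↥Ω → Set ↥Z, NonAnt Ω Z A β → (∀ ω, β ω ⊆ α ω) →
        ∀ ω, β ω ⊆ Gamma Ω Z A α ω := by

  refine ⟨fun ω h hh => hh.1, ?_, ?_⟩
  · -- NonAnt of Gamma
    have key : ∀ ω ω' : ↥Ω, A.restrict (ω : T → Y) = A.restrict (ω' : T → Y) →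
        resSet A (Gamma Ω Z A α ω) ⊆ resSet A (Gamma Ω Z A α ω') := by
      intro ω ω' hww g hg
      obtain ⟨h, ⟨hα, hI⟩, rfl⟩ := hg
      have hmem : A.restrict (h : T → X) ∈ resSet A (α ω') := by
        have := mem_iInter₂.mp hI ω' hww.symm
        exact this
      obtain ⟨h', hh', hrest⟩ := hmem
      refine ⟨h', ⟨hh', ?_⟩, hrest⟩
      have hr : A.restrict (h' : T → X) = A.restrict (h : T → X) := hrest
      rw [hr]
      refine mem_iInter₂.mpr fun η hη => mem_iInter₂.mp hI η ?_
      simpa [hww] using hη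
    intro ω ω' hww
    exact Subset.antisymm (key ω ω' hww) (key ω' ω hww.symm)
  · intro β hβna hβα ω h hh
    refine ⟨hβα ω hh, mem_iInter₂.mpr fun η hη => ?_⟩
    have : resSet A (β ω) = resSet A (β η) := hβna ω η hη.symm
    have hin : A.restrict (h : T → X) ∈ resSet A (β η) := by
      rw [← this]; exact ⟨h, hh, rfl⟩
    exact image_mono (hβα η) hin
end

section
/- Let A ⊆ T be nonempty. Then the operator Γ_A is idempotent: Γ_A(Γ_A(α)) = Γ_A(α) for every multifunction α. -/
open Set

/-- The operator `Γ_A` is idempotent. -/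
theorem stmt6 {T X Y : Type*} [Nonempty T] [Nonempty X] [Nonempty Y]
    (Ω : Set (T → Y)) (Z : Set (T → X)) (hΩ : Ω.Nonempty) (hZ : Z.Nonempty)
    (A : Set T) (hA : A.Nonempty) (α : ↥Ω → Set ↥Z) :
    Gamma Ω Z A (Gamma Ω Z A α) = Gamma Ω Z A α := by
  funext ω
  ext h
  simp only [Gamma, Set.mem_setOf_eq, Set.mem_iInter, resSet, Set.mem_image]
  constructor
  · rintro ⟨⟨hα, hI⟩, -⟩
    exact ⟨hα, hI⟩
  · rintro ⟨hα, hI⟩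
    refine ⟨⟨hα, hI⟩, ?_⟩
    intro ω' hω'
    obtain ⟨g, hg, hgA⟩ := hI ω' hω'
    refine ⟨g, ⟨hg, ?_⟩, hgA⟩
    intro ω'' hω''
    rw [hgA]
    exact hI ω'' (hω''.trans hω')
end

section
/- Let α be a multifunction and ℋ a nonempty family of nonempty subsets of T. If there exists ω ∈ Ω with ⋂_{A ∈ ℋ} Γ_A(α)(ω) = ∅, then N°_ℋ(α) = ∅, and consequently N°_{ℋ′}(α) = ∅ for every family ℋ′ of nonempty subsets of T with ℋ ⊆ ℋ′. -/
open Set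

/-- If `⋂_{A ∈ ℋ} Γ_A(α)(ω) = ∅` for some `ω`, then `N°_ℋ(α) = ∅`, and
consequently `N°_ℋ'(α) = ∅` for every family `ℋ'` of nonempty subsets with `ℋ ⊆ ℋ'`. -/
theorem stmt8 {T X Y : Type*} [Nonempty T] [Nonempty X] [Nonempty Y]
    (Ω : Set (T → Y)) (Z : Set (T → X)) (hΩ : Ω.Nonempty) (hZ : Z.Nonempty)
    (ℋ : Set (Set T)) (hℋ : ℋ.Nonempty) (hℋmem : ∀ A ∈ ℋ, A.Nonempty)
    (α : ↥Ω → Set ↥Z)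
    (h : ∃ ω : ↥Ω, ⋂ A ∈ ℋ, Gamma Ω Z A α ω = ∅) :
    NnaNE Ω Z ℋ α = ∅ ∧
      ∀ ℋ' : Set (Set T), (∀ A ∈ ℋ', A.Nonempty) → ℋ ⊆ ℋ' → NnaNE Ω Z ℋ' α = ∅ := by
  obtain ⟨ω, hω⟩ := h
  have key : ∀ ℋ' : Set (Set T), ℋ ⊆ ℋ' → NnaNE Ω Z ℋ' α = ∅ := by
    intro ℋ' hsub
    ext z
    simp only [mem_empty_iff_false, iff_false]
    rintro ⟨⟨hna, hsel⟩, hne⟩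
    obtain ⟨g, hg⟩ := hne ω
    have : g ∈ ⋂ A ∈ ℋ, Gamma Ω Z A α ω := by
      simp only [mem_iInter]
      intro A hA
      refine ⟨hsel ω hg, ?_⟩
      simp only [mem_iInter, mem_setOf_eq]
      intro ω' hω'
      have h1 := hna A (hsub hA) ω ω' hω'.symm
      have : A.restrict (g : T → X) ∈ resSet A (z ω) := ⟨g, hg, rfl⟩
      rw [h1] at this
      obtain ⟨g', hg', hgg'⟩ := this
      exact ⟨g', hsel ω' hg', hgg'⟩
    rw [hω] at this
    exact this
  exact ⟨key ℋ (subset_refl _), fun ℋ' _ hsub => key ℋ' hsub⟩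
end

section
/- Let H₁, H₂ be nonempty subsets of T with H₁ ⊆ H₂, and let α be an H₂-non-anticipative multifunction. Then Γ_{H₁}(α) is also H₂-non-anticipative. -/
open Set

/-- If `H₁ ⊆ H₂` are nonempty and `α` is `H₂`-non-anticipative, then `Γ_{H₁}(α)`
is also `H₂`-non-anticipative. -/
theorem stmt10 {T X Y : Type*} [Nonempty T] [Nonempty X] [Nonempty Y]
    (Ω : Set (T → Y)) (Z : Set (T → X)) (hΩ : Ω.Nonempty) (hZ : Z.Nonempty)
    (H₁ H₂ : Set T) (hH₁ : H₁.Nonempty) (hH₂ : H₂.Nonempty) (h12 : H₁ ⊆ H₂)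
    (α : ↥Ω → Set ↥Z) (hα : NonAnt Ω Z H₂ α) :
    NonAnt Ω Z H₂ (Gamma Ω Z H₁ α) := by
  have key : ∀ ω ω' : ↥Ω, H₂.restrict (ω : T → Y) = H₂.restrict (ω' : T → Y) →
      resSet H₂ (Gamma Ω Z H₁ α ω) ⊆ resSet H₂ (Gamma Ω Z H₁ α ω') := by
    intro ω ω' hωω' g hg
    obtain ⟨h, ⟨hhα, hhI⟩, rfl⟩ := hg
    have hmem : H₂.restrict (h : T → X) ∈ resSet H₂ (α ω') := by
      rw [← hα ω ω' hωω']; exact ⟨h, hhα, rfl⟩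
    obtain ⟨h', hh'α, hh'eq⟩ := hmem
    refine ⟨h', ⟨hh'α, ?_⟩, hh'eq⟩
    have h1eq : H₁.restrict (h' : T → X) = H₁.restrict (h : T → X) :=
      funext fun x => congrFun hh'eq ⟨x, h12 x.2⟩
    have hω1 : H₁.restrict (ω : T → Y) = H₁.restrict (ω' : T → Y) :=
      funext fun x => congrFun hωω' ⟨x, h12 x.2⟩
    rw [h1eq]
    simp only [Set.mem_iInter, Set.mem_setOf_eq] at hhI ⊢
    intro η hη
    exact hhI η (by rw [hη, ← hω1])
  intro ω ω' hωω'
  exact Set.Subset.antisymm (key ω ω' hωω') (key ω' ω hωω'.symm)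
end

section
/- Let α be a multifunction and let ℋ = {H_1, …, H_k} (k ∈ ℕ, k ≥ 1) be a finite chain of nonempty subsets of T with H_i ⊆ H_j whenever i ≤ j. Then the superposition Γ_{H_1}(Γ_{H_2}(⋯ Γ_{H_k}(α) ⋯)) is the ⊑-greatest element of N_ℋ(α): it belongs to N_ℋ(α), and β ⊑ Γ_{H_1}(⋯ Γ_{H_k}(α) ⋯) for every β ∈ N_ℋ(α). -/
open Set

section Aux

variable {T X Y : Type*} {Ω : Set (T → Y)} {Z : Set (T → X)}

lemma gamma_subset (A : Set T) (α : ↥Ω → Set ↥Z) (ω : ↥Ω) :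
    Gamma Ω Z A α ω ⊆ α ω := fun _ hh => hh.1

lemma resSet_mono {A : Set T} {F G : Set ↥Z} (h : F ⊆ G) : resSet A F ⊆ resSet A G :=
  Set.image_mono h

/-- One-directional version of: `Γ_A` applied to an `A`-non-anticipative `z` (for `B ⊆ A`)
gives an `A`-non-anticipative multifunction. -/
lemma gamma_resSet_subset {A B : Set T} (hBA : B ⊆ A) {z : ↥Ω → Set ↥Z}
    (hz : NonAnt Ω Z A z) {ω ω' : ↥Ω}
    (hωω' : A.restrict (ω : T → Y) = A.restrict (ω' : T → Y)) :
    resSet A (Gamma Ω Z B z ω) ⊆ resSet A (Gamma Ω Z B z ω') := by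
  rintro g ⟨h, ⟨hhz, hhS⟩, rfl⟩
  have hres : A.restrict (h : T → X) ∈ resSet A (z ω') := by
    rw [← hz ω ω' hωω']; exact ⟨h, hhz, rfl⟩
  obtain ⟨h', hh'z, hres'⟩ := hres
  refine ⟨h', ⟨hh'z, ?_⟩, hres'⟩
  have hB : B.restrict (h' : T → X) = B.restrict (h : T → X) := by
    funext b; exact congrFun hres' ⟨b.1, hBA b.2⟩
  have hωB : B.restrict (ω : T → Y) = B.restrict (ω' : T → Y) := by
    funext b; exact congrFun hωω' ⟨b.1, hBA b.2⟩
  rw [hB]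
  simp only [Set.mem_iInter, Set.mem_setOf_eq] at hhS ⊢
  intro η hη
  exact hhS η (hη.trans hωB.symm)

lemma nonAnt_gamma_of_subset {A B : Set T} (hBA : B ⊆ A) {z : ↥Ω → Set ↥Z}
    (hz : NonAnt Ω Z A z) : NonAnt Ω Z A (Gamma Ω Z B z) := fun ω ω' h =>
  (gamma_resSet_subset hBA hz h).antisymm (gamma_resSet_subset hBA hz h.symm)

/-- One-directional version of: `Γ_A α` is `A`-non-anticipative. -/
lemma gamma_resSet_subset' {A : Set T} (α : ↥Ω → Set ↥Z) {ω ω' : ↥Ω}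
    (hωω' : A.restrict (ω : T → Y) = A.restrict (ω' : T → Y)) :
    resSet A (Gamma Ω Z A α ω) ⊆ resSet A (Gamma Ω Z A α ω') := by
  rintro g ⟨h, ⟨hhα, hhS⟩, rfl⟩
  simp only [Set.mem_iInter, Set.mem_setOf_eq] at hhS
  obtain ⟨h', hh'α, hres'⟩ := hhS ω' hωω'.symm
  refine ⟨h', ⟨hh'α, ?_⟩, hres'⟩
  rw [show A.restrict (h' : T → X) = A.restrict (h : T → X) from hres']
  simp only [Set.mem_iInter, Set.mem_setOf_eq]
  intro η hη
  exact hhS η (hη.trans hωω'.symm)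

lemma nonAnt_gamma (A : Set T) (α : ↥Ω → Set ↥Z) : NonAnt Ω Z A (Gamma Ω Z A α) :=
  fun ω ω' h => (gamma_resSet_subset' α h).antisymm (gamma_resSet_subset' α h.symm)

/-- Maximality: any `A`-non-anticipative `β ⊑ z` satisfies `β ⊑ Γ_A z`. -/
lemma le_gamma {A : Set T} {β z : ↥Ω → Set ↥Z} (hβ : NonAnt Ω Z A β)
    (hsub : ∀ ω, β ω ⊆ z ω) (ω : ↥Ω) : β ω ⊆ Gamma Ω Z A z ω := by
  intro h hh
  refine ⟨hsub ω hh, ?_⟩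
  simp only [Set.mem_iInter, Set.mem_setOf_eq]
  intro η hη
  have hmem : A.restrict (h : T → X) ∈ resSet A (β η) := by
    rw [hβ η ω hη]; exact ⟨h, hh, rfl⟩
  exact resSet_mono (hsub η) hmem

lemma foldr_gamma_spec (L : List (Set T)) (hL : L.Pairwise (· ⊆ ·)) (α : ↥Ω → Set ↥Z) :
    (∀ A ∈ L, NonAnt Ω Z A (L.foldr (Gamma Ω Z) α)) ∧
    (∀ ω, L.foldr (Gamma Ω Z) α ω ⊆ α ω) ∧
    (∀ β, (∀ A ∈ L, NonAnt Ω Z A β) → (∀ ω, β ω ⊆ α ω) →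
      ∀ ω, β ω ⊆ L.foldr (Gamma Ω Z) α ω) := by
  induction L with
  | nil => exact ⟨by simp, fun ω => subset_rfl, fun β _ h => h⟩
  | cons B L ih =>
    obtain ⟨hB, hL'⟩ := List.pairwise_cons.mp hL
    obtain ⟨ihNA, ihsub, ihmax⟩ := ih hL'
    simp only [List.foldr_cons]
    refine ⟨?_, ?_, ?_⟩
    · intro A hA
      rcases List.mem_cons.mp hA with rfl | hA
      · exact nonAnt_gamma A _
      · exact nonAnt_gamma_of_subset (hB A hA) (ihNA A hA)
    · exact fun ω => (gamma_subset B _ ω).trans (ihsub ω)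
    · intro β hβNA hβsub ω
      exact le_gamma (hβNA B List.mem_cons_self)
        (ihmax β (fun A hA => hβNA A (List.mem_cons_of_mem B hA)) hβsub) ω

end Aux

/-- For a finite chain `ℋ = {H 0 ⊆ H 1 ⊆ ⋯ ⊆ H (k-1)}` of nonempty subsets of
`T`, the superposition `Γ_{H 0}(Γ_{H 1}(⋯ Γ_{H (k-1)}(α) ⋯))` is the `⊑`-greatest element of
`N_ℋ(α)`. -/
theorem stmt11 {T X Y : Type*} [Nonempty T] [Nonempty X] [Nonempty Y]
    (Ω : Set (T → Y)) (Z : Set (T → X)) (hΩ : Ω.Nonempty) (hZ : Z.Nonempty)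
    (k : ℕ) (hk : 1 ≤ k) (H : Fin k → Set T) (hne : ∀ i, (H i).Nonempty)
    (hchain : ∀ i j : Fin k, i ≤ j → H i ⊆ H j)
    (α : ↥Ω → Set ↥Z) :
    (List.ofFn H).foldr (Gamma Ω Z) α ∈ Nna Ω Z (Set.range H) α ∧
      ∀ β ∈ Nna Ω Z (Set.range H) α, ∀ ω : ↥Ω,
        β ω ⊆ (List.ofFn H).foldr (Gamma Ω Z) α ω := by
  have hpair : (List.ofFn H).Pairwise (· ⊆ ·) := by
    rw [List.pairwise_ofFn]
    exact fun i j hij => hchain i j hij.le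
  obtain ⟨hNA, hsub, hmax⟩ := foldr_gamma_spec (List.ofFn H) hpair α
  have hmemiff : ∀ A : Set T, A ∈ Set.range H ↔ A ∈ List.ofFn H := by
    intro A; rw [List.mem_ofFn]; exact Iff.rfl
  refine ⟨⟨fun A hA => hNA A ((hmemiff A).mp hA), hsub⟩, ?_⟩
  intro β hβ ω
  exact hmax β (fun A hA => hβ.1 A ((hmemiff A).mpr hA)) hβ.2 ω
end

section
/- Let ℋ be a nonempty family of nonempty subsets of T. Then the set of joint fixed points ⋂_{A ∈ ℋ} {β : Γ_A(β) = β} equals the set of all ℋ-non-anticipative multifunctions. -/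
open Set

/-- The set of joint fixed points of the family `{Γ_A : A ∈ ℋ}` equals the set
of all `ℋ`-non-anticipative multifunctions. -/
theorem stmt13 {T X Y : Type*} [Nonempty T] [Nonempty X] [Nonempty Y]
    (Ω : Set (T → Y)) (Z : Set (T → X)) (hΩ : Ω.Nonempty) (hZ : Z.Nonempty)
    (ℋ : Set (Set T)) (hℋ : ℋ.Nonempty) (hℋmem : ∀ A ∈ ℋ, A.Nonempty) :
    (⋂ A ∈ ℋ, {β : ↥Ω → Set ↥Z | Gamma Ω Z A β = β}) =
      {z : ↥Ω → Set ↥Z | ∀ A ∈ ℋ, NonAnt Ω Z A z} := by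
  ext β
  simp only [mem_iInter, mem_setOf_eq]
  constructor
  · intro hfix A hA ω ω' hres
    have hβ := hfix A hA
    ext x
    constructor
    · rintro ⟨h, hh, rfl⟩
      rw [← hβ] at hh
      exact mem_iInter₂.mp hh.2 ω' hres.symm
    · rintro ⟨h, hh, rfl⟩
      rw [← hβ] at hh
      exact mem_iInter₂.mp hh.2 ω hres
  · intro hna A hA
    funext ω
    ext h
    constructor
    · exact fun hh => hh.1
    · intro hh
      refine ⟨hh, ?_⟩
      simp only [mem_iInter, mem_setOf_eq]
      intro η hη
      rw [hna A hA η ω hη]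
      exact ⟨h, hh, rfl⟩
end

section
/- Let 𝒯 := {[t₀, τ] : τ ∈ [t₀, ϑ]} and let α be a multifunction. If there exists a 𝒯-non-anticipative multiselector of α with nonempty values (i.e., N°_𝒯(α) ≠ ∅), then the conditions (α, Δ) are feasible for every partition Δ of T. -/
open Set

/-- Let `𝒯 = {[t₀, τ] : τ ∈ [t₀, ϑ]}`. If `N°_𝒯(α) ≠ ∅`, then the conditions
`(α, Δ)` are feasible for every partition `Δ` of `T = [t₀, ϑ]`. -/
theorem stmt14 {X Y : Type*} [Nonempty X] [Nonempty Y] (t₀ ϑ : ℝ)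
    (Ω : Set (↥(Set.Icc t₀ ϑ) → Y)) (Z : Set (↥(Set.Icc t₀ ϑ) → X))
    (hΩ : Ω.Nonempty) (hZ : Z.Nonempty)
    (α : ↥Ω → Set ↥Z)
    (h : (NnaNE Ω Z
        {S : Set ↥(Set.Icc t₀ ϑ) | ∃ τ : ↥(Set.Icc t₀ ϑ),
          S = {t : ↥(Set.Icc t₀ ϑ) | (t : ℝ) ≤ (τ : ℝ)}} α).Nonempty) :
    ∀ (n : ℕ), 1 ≤ n → ∀ τ : Fin (n + 1) → ℝ, StrictMono τ → τ 0 = t₀ →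
      τ (Fin.last n) = ϑ → Feasible t₀ ϑ Ω Z α τ := by
  obtain ⟨z, ⟨hna, hsub⟩, hne⟩ := h
  intro n hn τ hmono h0 hlast
  refine ⟨fun _ => z, fun _ ω => hsub ω, fun ωs hcompat => ⟨fun i => hne (ωs i), ?_⟩⟩
  intro i j hij
  have hmemH : Hset t₀ ϑ τ i ∈ {S : Set ↥(Set.Icc t₀ ϑ) | ∃ τ' : ↥(Set.Icc t₀ ϑ),
      S = {t : ↥(Set.Icc t₀ ϑ) | (t : ℝ) ≤ (τ' : ℝ)}} := by
    refine ⟨⟨τ i.succ, ?_, ?_⟩, rfl⟩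
    · rw [← h0]; exact hmono.monotone (Fin.zero_le _)
    · rw [← hlast]; exact hmono.monotone (Fin.le_last _)
  exact hna _ hmemH (ωs i) (ωs j) (hcompat i j hij)
end

section
/- For the concrete setting of Example 3 (T = [0,2], Ω = {v_j : j ∈ ℕ, j ≥ 1}, Z = {u_i : i ∈ ℕ, i ≥ 1}, α(v_j) = {u_i : i ≥ j}, 𝒯 = {[0, τ] : τ ∈ [0,2]}), the multifunction α has no 𝒯-non-anticipative multiselector with nonempty values: N°_𝒯(α) = ∅. -/
open Set

/-- Example 3: the control `u_i` (`i ≥ 1`) on `T = [0,2]`. -/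
noncomputable def uex (i : ℕ) (t : ↥(Set.Icc (0:ℝ) 2)) : ℝ :=
  if (t : ℝ) ≤ 1 then 0 else 1 - 1 / (i : ℝ)

/-- Example 3: the disturbance `v_j` (`j ≥ 1`) on `T = [0,2]`. -/
noncomputable def vex (j : ℕ) (t : ↥(Set.Icc (0:ℝ) 2)) : ℝ :=
  if (t : ℝ) ≤ 1 + 1 / (j : ℝ) then 0 else 1

/-- Example 3: the set of disturbances `Ω = {v_j : j ≥ 1}`. -/
def Ωex : Set (↥(Set.Icc (0:ℝ) 2) → ℝ) := {f | ∃ j : ℕ, 1 ≤ j ∧ f = vex j}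

/-- Example 3: the set of trajectories `Z = {u_i : i ≥ 1}`. -/
def Zex : Set (↥(Set.Icc (0:ℝ) 2) → ℝ) := {f | ∃ i : ℕ, 1 ≤ i ∧ f = uex i}

/-- Example 3: the multifunction of optimal answers, `α(v_j) = {u_i : i ≥ j}`. -/
def αex : ↥Ωex → Set ↥Zex := fun ω =>
  {h | ∃ j i : ℕ, 1 ≤ j ∧ j ≤ i ∧ (ω : ↥(Set.Icc (0:ℝ) 2) → ℝ) = vex j ∧
    (h : ↥(Set.Icc (0:ℝ) 2) → ℝ) = uex i}

lemma vex_le {a b : ℕ} (ha : 1 ≤ a) (hb : 1 ≤ b) (h : vex a = vex b) : b ≤ a := by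
  have ha' : (0:ℝ) < a := by exact_mod_cast ha
  have hb' : (0:ℝ) < b := by exact_mod_cast hb
  have hta : (1 + 1/(a:ℝ)) ∈ Set.Icc (0:ℝ) 2 := by
    constructor
    · positivity
    · have : 1/(a:ℝ) ≤ 1 := by
        rw [div_le_one ha']; exact_mod_cast ha
      linarith
  have := congrFun h ⟨1 + 1/(a:ℝ), hta⟩
  simp only [vex] at this
  rw [if_pos le_rfl] at this
  by_cases hc : (1 + 1/(a:ℝ) : ℝ) ≤ 1 + 1/(b:ℝ)
  · have h1 : 1/(a:ℝ) ≤ 1/(b:ℝ) := by linarith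
    rw [div_le_div_iff₀ ha' hb'] at h1
    have : (b:ℝ) ≤ (a:ℝ) := by linarith
    exact_mod_cast this
  · rw [if_neg hc] at this
    norm_num at this

/-- In Example 3, with `𝒯 = {[0,τ] : τ ∈ [0,2]}`, the multifunction `α` has no
`𝒯`-non-anticipative multiselector with nonempty values: `N°_𝒯(α) = ∅`. -/
theorem stmt15 :
    NnaNE Ωex Zex
      {S : Set ↥(Set.Icc (0:ℝ) 2) | ∃ τ : ↥(Set.Icc (0:ℝ) 2),
        S = {t : ↥(Set.Icc (0:ℝ) 2) | (t : ℝ) ≤ (τ : ℝ)}} αex = ∅ := by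
  ext z
  simp only [NnaNE, Nna, Set.mem_setOf_eq, Set.mem_empty_iff_false, iff_false, not_and]
  rintro ⟨hna, hsub⟩ hne
  have hΩ1 : vex 1 ∈ Ωex := ⟨1, le_refl 1, rfl⟩
  obtain ⟨h, hh⟩ := hne ⟨vex 1, hΩ1⟩
  obtain ⟨j, i, hj1, hji, hωj, hhi⟩ := hsub _ hh
  have hi1 : 1 ≤ i := hj1.trans hji
  have hi' : (0:ℝ) < i := by exact_mod_cast hi1
  have hΩ2 : vex (i+1) ∈ Ωex := ⟨i+1, by omega, rfl⟩
  have hi1' : (0:ℝ) < (i:ℝ) + 1 := by positivity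
  have hle1 : 1/((i:ℝ)+1) ≤ 1 := by
    rw [div_le_one hi1']; linarith
  have hτmem : (1 + 1/((i:ℝ)+1)) ∈ Set.Icc (0:ℝ) 2 := by
    constructor
    · positivity
    · linarith
  set τ : ↥(Set.Icc (0:ℝ) 2) := ⟨1 + 1/((i:ℝ)+1), hτmem⟩ with hτdef
  set A : Set ↥(Set.Icc (0:ℝ) 2) := {t : ↥(Set.Icc (0:ℝ) 2) | (t : ℝ) ≤ (τ : ℝ)} with hAdef
  have hA : A ∈ {S : Set ↥(Set.Icc (0:ℝ) 2) | ∃ τ : ↥(Set.Icc (0:ℝ) 2),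
      S = {t : ↥(Set.Icc (0:ℝ) 2) | (t : ℝ) ≤ (τ : ℝ)}} := ⟨τ, rfl⟩
  have hcast : ((i:ℝ) + 1) = ((i+1 : ℕ) : ℝ) := by push_cast; ring
  have hres : A.restrict ((⟨vex 1, hΩ1⟩ : ↥Ωex) : ↥(Set.Icc (0:ℝ) 2) → ℝ)
      = A.restrict ((⟨vex (i+1), hΩ2⟩ : ↥Ωex) : ↥(Set.Icc (0:ℝ) 2) → ℝ) := by
    funext t
    obtain ⟨t, ht⟩ := t
    simp only [Set.restrict, Set.domRestrict_apply, vex]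
    have ht' : (t : ℝ) ≤ 1 + 1/((i:ℝ)+1) := ht
    rw [if_pos, if_pos]
    · rw [← hcast]; exact ht'
    · have : 1/((i:ℝ)+1) ≤ 1/(1:ℝ) := by
        apply one_div_le_one_div_of_le <;> linarith
      push_cast
      linarith
  have hkey := hna A hA ⟨vex 1, hΩ1⟩ ⟨vex (i+1), hΩ2⟩ hres
  have hmem : A.restrict (h : ↥(Set.Icc (0:ℝ) 2) → ℝ) ∈ resSet A (z ⟨vex (i+1), hΩ2⟩) := by
    rw [← hkey]; exact ⟨h, hh, rfl⟩
  obtain ⟨g, hg, hgr⟩ := hmem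
  obtain ⟨j', i', hj'1, hj'i', hωj', hgi'⟩ := hsub _ hg
  have hj'ge : i + 1 ≤ j' := vex_le hj'1 (by omega) hωj'.symm
  have hi'ge : i + 1 ≤ i' := hj'ge.trans hj'i'
  have hτA : τ ∈ A := show (τ:ℝ) ≤ (τ:ℝ) from le_rfl
  have heval := congrFun hgr (⟨τ, hτA⟩ : ↥A)
  simp only [Set.restrict, Set.domRestrict_apply, hgi', hhi, uex] at heval
  have hτgt : ¬ ((τ : ℝ) ≤ 1) := by
    simp only [hτdef]
    push_neg
    have : (0:ℝ) < 1/((i:ℝ)+1) := by positivity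
    linarith
  rw [if_neg hτgt, if_neg hτgt] at heval
  have hii' : (0:ℝ) < i' := by
    have : 1 ≤ i' := by omega
    exact_mod_cast this
  have h1 : 1/(i':ℝ) = 1/(i:ℝ) := by linarith
  have h2 : (i:ℝ) = (i':ℝ) := by
    field_simp at h1
    linarith
  have : i = i' := by exact_mod_cast h2
  omega
end

section
/- For the concrete setting of Example 3 (T = [0,2], Ω = {v_j : j ∈ ℕ, j ≥ 1}, Z = {u_i : i ∈ ℕ, i ≥ 1}, α(v_j) = {u_i : i ≥ j}), for every partition Δ = {0 = τ₀ < τ₁ < ⋯ < τ_n = 2} of [0,2] one has N°_{ℋ_Δ}(α) ≠ ∅, i.e., α has an ℋ_Δ-non-anticipative multiselector with nonempty values (equivalently, the conditions (α, Δ) are feasible for every partition Δ). -/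
open Set

lemma uex_mem_Zex (k : ℕ) (hk : 1 ≤ k) : uex k ∈ Zex := ⟨k, hk, rfl⟩

lemma vex_key (j j' : ℕ) (hj : 1 ≤ j) (hj' : 1 ≤ j') (c : ℝ) (hc2 : c ≤ 2)
    (hjc : 1 + 1/(j:ℝ) < c)
    (heq : ∀ t : ↥(Set.Icc (0:ℝ) 2), (t:ℝ) ≤ c → vex j t = vex j' t) : j = j' := by
  have hjR : (1:ℝ) ≤ (j:ℝ) := by exact_mod_cast hj
  have hj'R : (1:ℝ) ≤ (j':ℝ) := by exact_mod_cast hj'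
  have hjpos : (0:ℝ) < j := by linarith
  have hj'pos : (0:ℝ) < j' := by linarith
  have hjle1 : 1/(j:ℝ) ≤ 1 := by rw [div_le_one hjpos]; linarith
  have hj'le1 : 1/(j':ℝ) ≤ 1 := by rw [div_le_one hj'pos]; linarith
  rcases lt_trichotomy j j' with h | h | h
  · exfalso
    have hlt : 1/(j':ℝ) < 1/(j:ℝ) := by
      apply one_div_lt_one_div_of_lt hjpos; exact_mod_cast h
    have ht : (1 + 1/(j:ℝ)) ∈ Set.Icc (0:ℝ) 2 := by
      constructor <;> [positivity; linarith]
    have := heq ⟨1 + 1/(j:ℝ), ht⟩ (le_of_lt hjc)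
    simp only [vex] at this
    rw [if_pos le_rfl, if_neg (by push_cast; linarith)] at this
    norm_num at this
  · exact h
  · exfalso
    have hlt : 1/(j:ℝ) < 1/(j':ℝ) := by
      apply one_div_lt_one_div_of_lt hj'pos; exact_mod_cast h
    set t : ℝ := min (1 + 1/(j':ℝ)) c with htdef
    have ht : t ∈ Set.Icc (0:ℝ) 2 := by
      constructor
      · have h0j : (0:ℝ) < 1/(j:ℝ) := by positivity
        apply le_min (by positivity) (by linarith)
      · exact le_trans (min_le_right _ _) hc2
    have htc : t ≤ c := min_le_right _ _
    have := heq ⟨t, ht⟩ htc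
    simp only [vex] at this
    rw [if_neg (by
        push_neg
        exact lt_min (by linarith) hjc),
      if_pos (min_le_left _ _)] at this
    norm_num at this

/-- In Example 3, for every partition `Δ = {0 = τ 0 < τ 1 < ⋯ < τ n = 2}` of
`[0,2]` one has `N°_{ℋ_Δ}(α) ≠ ∅`. -/
theorem stmt16 (n : ℕ) (hn : 1 ≤ n) (τ : Fin (n + 1) → ℝ) (hτ : StrictMono τ)
    (hτ0 : τ 0 = 0) (hτn : τ (Fin.last n) = 2) :
    (NnaNE Ωex Zex (HΔ 0 2 τ) αex).Nonempty := by
  have hne : Nonempty (Fin n) := ⟨⟨0, hn⟩⟩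
  set s := Finset.univ.sup' Finset.univ_nonempty (fun i : Fin n => 1/(τ i.succ - 1)) with hs
  set M := max 1 ⌈s⌉₊ with hMdef
  have hM1 : 1 ≤ M := le_max_left _ _
  have hM : ∀ i : Fin n, 1/(τ i.succ - 1) ≤ (M:ℝ) := by
    intro i
    have h1 := Finset.le_sup' (fun i : Fin n => 1/(τ i.succ - 1)) (Finset.mem_univ i)
    rw [← hs] at h1
    refine le_trans h1 (le_trans (Nat.le_ceil s) ?_)
    exact_mod_cast le_max_right 1 ⌈s⌉₊
  have key2 : ∀ (i : Fin n) (j : ℕ), 1 ≤ j → 1 < τ i.succ → τ i.succ ≤ 1 + 1/(j:ℝ) → j ≤ M := by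
    intro i j hj hc1 hle
    have hjpos : (0:ℝ) < j := by exact_mod_cast Nat.lt_of_lt_of_le Nat.zero_lt_one hj
    have h1 : τ i.succ - 1 ≤ 1/(j:ℝ) := by linarith
    have h2 : (j:ℝ) ≤ 1/(τ i.succ - 1) := by
      have := one_div_le_one_div_of_le (by linarith : (0:ℝ) < τ i.succ - 1) h1
      rwa [one_div_one_div] at this
    have : (j:ℝ) ≤ (M:ℝ) := le_trans h2 (hM i)
    exact_mod_cast this
  -- the multiselector
  set z : ↥Ωex → Set ↥Zex := fun ω =>
    {h : ↥Zex | ∃ j : ℕ, 1 ≤ j ∧ (ω : ↥(Set.Icc (0:ℝ) 2) → ℝ) = vex j ∧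
      (h : ↥(Set.Icc (0:ℝ) 2) → ℝ) = uex (max j M)} with hz
  have hc2 : ∀ i : Fin n, τ i.succ ≤ 2 := fun i => hτn ▸ hτ.monotone (Fin.le_last _)
  -- main restriction lemma
  have main : ∀ (i : Fin n) (j j' : ℕ), 1 ≤ j → 1 ≤ j' →
      (Hset 0 2 τ i).restrict (vex j) = (Hset 0 2 τ i).restrict (vex j') →
      (Hset 0 2 τ i).restrict (uex (max j M)) = (Hset 0 2 τ i).restrict (uex (max j' M)) := by
    intro i j j' hj hj' hres
    by_cases hc1 : τ i.succ ≤ 1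
    · funext t
      have ht1 : ((t : ↥(Set.Icc (0:ℝ) 2)) : ℝ) ≤ 1 := le_trans t.2 hc1
      show uex (max j M) ↑t = uex (max j' M) ↑t
      rw [uex, uex, if_pos ht1, if_pos ht1]
    · push_neg at hc1
      have heqfun : ∀ (jj jj' : ℕ), 1 ≤ jj → 1 ≤ jj' → 1 + 1/(jj:ℝ) < τ i.succ →
          (Hset 0 2 τ i).restrict (vex jj) = (Hset 0 2 τ i).restrict (vex jj') → jj = jj' := by
        intro jj jj' h1 h2 h3 h4
        exact vex_key jj jj' h1 h2 (τ i.succ) (hc2 i) h3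
          (fun t ht => congrFun h4 ⟨t, ht⟩)
      by_cases hjle : τ i.succ ≤ 1 + 1/(j:ℝ)
      · by_cases hj'le : τ i.succ ≤ 1 + 1/(j':ℝ)
        · rw [max_eq_right (key2 i j hj hc1 hjle), max_eq_right (key2 i j' hj' hc1 hj'le)]
        · push_neg at hj'le
          rw [heqfun j' j hj' hj hj'le hres.symm]
      · push_neg at hjle
        rw [heqfun j j' hj hj' hjle hres]
  refine ⟨z, ⟨⟨?_, ?_⟩, ?_⟩⟩
  · -- non-anticipativity
    rintro A ⟨i, rfl⟩
    have step : ∀ ω ω' : ↥Ωex,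
        (Hset 0 2 τ i).restrict (ω : ↥(Set.Icc (0:ℝ) 2) → ℝ) =
          (Hset 0 2 τ i).restrict (ω' : ↥(Set.Icc (0:ℝ) 2) → ℝ) →
        resSet (Hset 0 2 τ i) (z ω) ⊆ resSet (Hset 0 2 τ i) (z ω') := by
      rintro ω ω' hres x ⟨h, ⟨j, hj1, hωj, hhj⟩, rfl⟩
      obtain ⟨j', hj'1, hωj'⟩ := ω'.2
      refine ⟨⟨uex (max j' M), uex_mem_Zex _ (le_trans hj'1 (le_max_left _ _))⟩,
        ⟨j', hj'1, hωj', rfl⟩, ?_⟩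
      have hres' : (Hset 0 2 τ i).restrict (vex j) = (Hset 0 2 τ i).restrict (vex j') := by
        rw [← hωj, ← hωj']; exact hres
      show (Hset 0 2 τ i).restrict (uex (max j' M)) =
        (Hset 0 2 τ i).restrict (h : ↥(Set.Icc (0:ℝ) 2) → ℝ)
      rw [hhj]
      exact (main i j j' hj1 hj'1 hres').symm
    exact fun ω ω' hres => Set.Subset.antisymm (step ω ω' hres) (step ω' ω hres.symm)
  · -- z ⊑ α
    rintro ω h ⟨j, hj1, hωj, hhj⟩
    exact ⟨j, max j M, hj1, le_max_left _ _, hωj, hhj⟩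
  · -- nonempty values
    intro ω
    obtain ⟨j, hj1, hωj⟩ := ω.2
    exact ⟨⟨uex (max j M), uex_mem_Zex _ (le_trans hj1 (le_max_left _ _))⟩, j, hj1, hωj, rfl⟩
end

section
/- The operators Γ_A are in general not commutative: there exist nonempty sets T, X, Y, a nonempty set Ω of functions T → Y, a nonempty set Z of functions T → X, nonempty subsets H₁ ⊆ H₂ of T, and a multifunction α such that Γ_{H₁}(Γ_{H₂}(α)) ≠ Γ_{H₂}(Γ_{H₁}(α)). -/
open Set

namespace Stmt17Aux

def f0 : Fin 3 → Bool := ![false, false, false]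
def f1 : Fin 3 → Bool := ![false, false, true]
def f2 : Fin 3 → Bool := ![false, true, false]

def Om : Set (Fin 3 → Bool) := {f0, f1, f2}

lemma hf0 : f0 ∈ Om := by left; rfl
lemma hf1 : f1 ∈ Om := by right; left; rfl
lemma hf2 : f2 ∈ Om := by right; right; rfl

def H1 : Set (Fin 3) := {0}
def H2 : Set (Fin 3) := {0, 1}

noncomputable def al : ↥Om → Set ↥Om :=
  fun ω => if (ω : Fin 3 → Bool) 2 then {⟨f2, hf2⟩} else {⟨f0, hf0⟩}

lemma zero_false (z : ↥Om) : (z : Fin 3 → Bool) 0 = false := by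
  rcases z with ⟨zf, hz⟩
  rcases hz with rfl | rfl | rfl <;> rfl

lemma resH1_eq (z z' : ↥Om) :
    H1.restrict (z : Fin 3 → Bool) = H1.restrict (z' : Fin 3 → Bool) := by
  refine Set.restrict_eq_restrict_iff.mpr ?_
  intro t ht
  rcases ht with rfl
  rw [zero_false, zero_false]

lemma one_mem_H2 : (1 : Fin 3) ∈ H2 := by right; rfl

lemma resH2_f2 (η : ↥Om) (h : H2.restrict (η : Fin 3 → Bool) = H2.restrict f2) :
    η = ⟨f2, hf2⟩ := by
  rcases η with ⟨ηf, hη⟩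
  rcases hη with rfl | rfl | rfl
  · exact absurd (congrFun h ⟨1, one_mem_H2⟩) (by simp [f0, f2, Set.restrict])
  · exact absurd (congrFun h ⟨1, one_mem_H2⟩) (by simp [f1, f2, Set.restrict])
  · rfl

lemma al_f0 : al ⟨f0, hf0⟩ = {⟨f0, hf0⟩} := by simp [al, f0]
lemma al_f1 : al ⟨f1, hf1⟩ = {⟨f2, hf2⟩} := by simp [al, f1]
lemma al_f2 : al ⟨f2, hf2⟩ = {⟨f0, hf0⟩} := by simp [al, f2]

lemma resH2_f0_f1 : H2.restrict (f0 : Fin 3 → Bool) = H2.restrict f1 := by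
  refine Set.restrict_eq_restrict_iff.mpr ?_
  intro t ht
  rcases ht with rfl | rfl <;> rfl

lemma resH2_f0_ne_f2 : H2.restrict (f0 : Fin 3 → Bool) ≠ H2.restrict f2 := by
  intro h
  exact absurd (congrFun h ⟨1, one_mem_H2⟩) (by simp [f0, f2, Set.restrict])

-- Γ_{H2} α (f0) = ∅
lemma gammaH2_f0 : Gamma Om Om H2 al ⟨f0, hf0⟩ = ∅ := by
  ext h
  simp only [Gamma, Set.mem_setOf_eq, Set.mem_empty_iff_false, iff_false, not_and]
  intro hmem hint
  rw [al_f0] at hmem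
  rcases hmem with rfl
  have h1 : H2.restrict (f0 : Fin 3 → Bool) ∈ resSet H2 (al ⟨f1, hf1⟩) := by
    have := Set.mem_iInter₂.mp hint ⟨f1, hf1⟩ resH2_f0_f1.symm
    exact this
  rw [al_f1] at h1
  rcases h1 with ⟨z, hz, hz2⟩
  rcases hz with rfl
  exact resH2_f0_ne_f2 hz2.symm

-- z0 ∈ Γ_{H1} α (f2)
lemma memGammaH1_f2 : (⟨f0, hf0⟩ : ↥Om) ∈ Gamma Om Om H1 al ⟨f2, hf2⟩ := by
  constructor
  · rw [al_f2]; rfl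
  · refine Set.mem_iInter₂.mpr fun η hη => ?_
    by_cases hc : (η : Fin 3 → Bool) 2
    · exact ⟨⟨f2, hf2⟩, by simp [al, hc], resH1_eq _ _⟩
    · exact ⟨⟨f0, hf0⟩, by simp [al, hc], resH1_eq _ _⟩

lemma memRHS : (⟨f0, hf0⟩ : ↥Om) ∈ Gamma Om Om H2 (Gamma Om Om H1 al) ⟨f2, hf2⟩ := by
  refine ⟨memGammaH1_f2, Set.mem_iInter₂.mpr fun η hη => ?_⟩
  have := resH2_f2 η hη
  subst this
  exact ⟨⟨f0, hf0⟩, memGammaH1_f2, rfl⟩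

lemma notMemLHS : (⟨f0, hf0⟩ : ↥Om) ∉ Gamma Om Om H1 (Gamma Om Om H2 al) ⟨f2, hf2⟩ := by
  rintro ⟨-, hint⟩
  have h1 : H1.restrict (f0 : Fin 3 → Bool) ∈ resSet H1 (Gamma Om Om H2 al ⟨f0, hf0⟩) :=
    Set.mem_iInter₂.mp hint ⟨f0, hf0⟩ (resH1_eq ⟨f0, hf0⟩ ⟨f2, hf2⟩)
  rw [gammaH2_f0] at h1
  rcases h1 with ⟨z, hz, -⟩
  exact hz

end Stmt17Aux

/-- The operators `Γ_A` are in general not commutative. -/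
theorem stmt17 :
    ∃ (T X Y : Type) (_ : Nonempty T) (_ : Nonempty X) (_ : Nonempty Y)
      (Ω : Set (T → Y)) (Z : Set (T → X)) (_ : Ω.Nonempty) (_ : Z.Nonempty)
      (H₁ H₂ : Set T) (_ : H₁.Nonempty) (_ : H₂.Nonempty) (_ : H₁ ⊆ H₂)
      (α : ↥Ω → Set ↥Z),
      Gamma Ω Z H₁ (Gamma Ω Z H₂ α) ≠ Gamma Ω Z H₂ (Gamma Ω Z H₁ α) := by
  open Stmt17Aux in
  refine ⟨Fin 3, Bool, Bool, ⟨0⟩, ⟨false⟩, ⟨false⟩, Om, Om, ⟨f0, hf0⟩, ⟨f0, hf0⟩,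
    H1, H2, ⟨0, rfl⟩, ⟨0, by left; rfl⟩, fun t ht => by rcases ht with rfl; left; rfl,
    al, ?_⟩
  intro h
  exact notMemLHS (h ▸ memRHS)
end

section
/- The map A ↦ Γ_A(α) is in general not isotonic with respect to inclusion of A and the order ⊑: there exist nonempty sets T, X, Y, a nonempty set Ω of functions T → Y, a nonempty set Z of functions T → X, nonempty subsets H₁ ⊆ H₂ of T, and a multifunction α such that neither Γ_{H₁}(α) ⊑ Γ_{H₂}(α) nor Γ_{H₂}(α) ⊑ Γ_{H₁}(α). -/
open Set

lemma res1 (f g : Fin 3 → Bool) :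
    ({0} : Set (Fin 3)).restrict f = ({0} : Set (Fin 3)).restrict g ↔ f 0 = g 0 := by
  constructor
  · intro h; exact congrFun h ⟨0, rfl⟩
  · intro h; funext x; obtain ⟨x, hx⟩ := x; simp only [mem_singleton_iff] at hx
    subst hx; exact h

lemma res2 (f g : Fin 3 → Bool) :
    ({0,1} : Set (Fin 3)).restrict f = ({0,1} : Set (Fin 3)).restrict g ↔
      f 0 = g 0 ∧ f 1 = g 1 := by
  constructor
  · intro h; exact ⟨congrFun h ⟨0, Or.inl rfl⟩, congrFun h ⟨1, Or.inr rfl⟩⟩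
  · rintro ⟨h0, h1⟩; funext x; obtain ⟨x, hx⟩ := x
    rcases hx with hx | hx <;> subst hx <;> assumption

-- the data
def wA : Fin 3 → Bool := fun _ => false
def wB : Fin 3 → Bool := fun t => decide (t = 2)
def wC : Fin 3 → Bool := fun t => decide (t = 1)
def fh : Fin 3 → Bool := fun _ => false
def fh' : Fin 3 → Bool := fun t => decide (t = 0)
def fB : Fin 3 → Bool := fun t => decide (t = 1)

def Om : Set (Fin 3 → Bool) := {wA, wB, wC}
def Zs : Set (Fin 3 → Bool) := univ

noncomputable def al : ↥Om → Set ↥Zs := fun ω =>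
  Subtype.val ⁻¹' (if (ω : Fin 3 → Bool) = wC then {fh}
    else if (ω : Fin 3 → Bool) = wB then {fB, fh'} else ({fh, fh'} : Set (Fin 3 → Bool)))

lemma hABC : wA ≠ wB ∧ wA ≠ wC ∧ wB ≠ wC := by
  refine ⟨fun h => ?_, fun h => ?_, fun h => ?_⟩
  · exact absurd (congrFun h 2) (by decide)
  · exact absurd (congrFun h 1) (by decide)
  · exact absurd (congrFun h 1) (by decide)


def OA : ↥Om := ⟨wA, Or.inl rfl⟩

lemma al_A (ω : ↥Om) (h : (ω : Fin 3 → Bool) = wA) :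
    al ω = Subtype.val ⁻¹' ({fh, fh'} : Set (Fin 3 → Bool)) := by
  simp only [al, h, if_neg (hABC.2.1), if_neg hABC.1]

lemma al_B (ω : ↥Om) (h : (ω : Fin 3 → Bool) = wB) :
    al ω = Subtype.val ⁻¹' ({fB, fh'} : Set (Fin 3 → Bool)) := by
  simp [al, h, hABC.2.2]

lemma al_C (ω : ↥Om) (h : (ω : Fin 3 → Bool) = wC) :
    al ω = Subtype.val ⁻¹' ({fh} : Set (Fin 3 → Bool)) := by
  simp [al, h]

lemma mem_resSet {A : Set (Fin 3)} {F : Set ↥Zs} {r : ↥A → Bool} :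
    r ∈ resSet A F ↔ ∃ g : ↥Zs, g ∈ F ∧ A.restrict (g : Fin 3 → Bool) = r :=
  ⟨fun ⟨g, hg, he⟩ => ⟨g, hg, he⟩, fun ⟨g, hg, he⟩ => ⟨g, hg, he⟩⟩

theorem main :
      ¬ (∀ ω, Gamma Om Zs {0} al ω ⊆ Gamma Om Zs {0,1} al ω) ∧
      ¬ (∀ ω, Gamma Om Zs {0,1} al ω ⊆ Gamma Om Zs {0} al ω) := by
  have hfh : (⟨fh, mem_univ _⟩ : ↥Zs) ∈ al OA := by
    rw [al_A OA rfl]; exact Or.inl rfl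
  have hfh' : (⟨fh', mem_univ _⟩ : ↥Zs) ∈ al OA := by
    rw [al_A OA rfl]; exact Or.inr rfl
  constructor
  · intro hall
    have h1 : (⟨fh, mem_univ _⟩ : ↥Zs) ∈ Gamma Om Zs {0} al OA := by
      refine ⟨hfh, ?_⟩
      rw [mem_iInter₂]
      rintro ⟨ω', hω'⟩ _
      simp only [Om, mem_insert_iff, mem_singleton_iff] at hω'
      rcases hω' with h | h | h
      · rw [al_A _ h, mem_resSet]
        exact ⟨⟨fh, mem_univ _⟩, Or.inl rfl, rfl⟩
      · rw [al_B _ h, mem_resSet]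
        exact ⟨⟨fB, mem_univ _⟩, Or.inl rfl, (res1 fB fh).2 (by decide)⟩
      · rw [al_C _ h, mem_resSet]
        exact ⟨⟨fh, mem_univ _⟩, rfl, rfl⟩
    have h2 := (hall OA h1).2
    rw [mem_iInter₂] at h2
    have hBmem : (⟨wB, Or.inr (Or.inl rfl)⟩ : ↥Om) ∈
        {η : ↥Om | ({0,1} : Set (Fin 3)).restrict (η : Fin 3 → Bool) =
          ({0,1} : Set (Fin 3)).restrict (OA : Fin 3 → Bool)} :=
      (res2 wB wA).2 (by decide)
    have h3 := h2 _ hBmem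
    rw [al_B _ rfl, mem_resSet] at h3
    obtain ⟨g, hg, he⟩ := h3
    rcases hg with hg | hg
    · have h01 := congrFun he ⟨1, Or.inr rfl⟩
      have hg' : (g : Fin 3 → Bool) = fB := hg
      rw [show ({0,1} : Set (Fin 3)).restrict (g : Fin 3 → Bool) ⟨1, Or.inr rfl⟩
          = (g : Fin 3 → Bool) 1 from rfl, hg'] at h01
      exact absurd h01 (by decide)
    · have h01 := congrFun he ⟨0, Or.inl rfl⟩
      have hg' : (g : Fin 3 → Bool) = fh' := hg
      rw [show ({0,1} : Set (Fin 3)).restrict (g : Fin 3 → Bool) ⟨0, Or.inl rfl⟩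
          = (g : Fin 3 → Bool) 0 from rfl, hg'] at h01
      exact absurd h01 (by decide)
  · intro hall
    have h1 : (⟨fh', mem_univ _⟩ : ↥Zs) ∈ Gamma Om Zs {0,1} al OA := by
      refine ⟨hfh', ?_⟩
      rw [mem_iInter₂]
      rintro ⟨ω', hω'⟩ hres
      simp only [Om, mem_insert_iff, mem_singleton_iff] at hω'
      rcases hω' with h | h | h
      · rw [al_A _ h, mem_resSet]
        exact ⟨⟨fh', mem_univ _⟩, Or.inr rfl, rfl⟩
      · rw [al_B _ h, mem_resSet]
        exact ⟨⟨fh', mem_univ _⟩, Or.inr rfl, rfl⟩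
      · exfalso
        have h1 := congrFun hres ⟨1, Or.inr rfl⟩
        rw [show ({0,1} : Set (Fin 3)).restrict ((⟨ω', hω'⟩ : ↥Om) : Fin 3 → Bool) ⟨1, Or.inr rfl⟩
            = ω' 1 from rfl, h] at h1
        exact absurd h1 (by decide)
    have h2 := (hall OA h1).2
    rw [mem_iInter₂] at h2
    have hCmem : (⟨wC, Or.inr (Or.inr rfl)⟩ : ↥Om) ∈
        {η : ↥Om | ({0} : Set (Fin 3)).restrict (η : Fin 3 → Bool) =
          ({0} : Set (Fin 3)).restrict (OA : Fin 3 → Bool)} :=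
      (res1 wC wA).2 (by decide)
    have h3 := h2 _ hCmem
    rw [al_C _ rfl, mem_resSet] at h3
    obtain ⟨g, hg, he⟩ := h3
    have hg' : (g : Fin 3 → Bool) = fh := hg
    have h0 := congrFun he ⟨0, rfl⟩
    rw [show ({0} : Set (Fin 3)).restrict (g : Fin 3 → Bool) ⟨0, rfl⟩
        = (g : Fin 3 → Bool) 0 from rfl, hg'] at h0
    exact absurd h0 (by decide)

/-- The map `A ↦ Γ_A(α)` is in general not isotonic: there are nonempty
`H₁ ⊆ H₂` and `α` with neither `Γ_{H₁}(α) ⊑ Γ_{H₂}(α)` nor `Γ_{H₂}(α) ⊑ Γ_{H₁}(α)`. -/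
theorem stmt18 :
    ∃ (T X Y : Type) (_ : Nonempty T) (_ : Nonempty X) (_ : Nonempty Y)
      (Ω : Set (T → Y)) (Z : Set (T → X)) (_ : Ω.Nonempty) (_ : Z.Nonempty)
      (H₁ H₂ : Set T) (_ : H₁.Nonempty) (_ : H₂.Nonempty) (_ : H₁ ⊆ H₂)
      (α : ↥Ω → Set ↥Z),
      ¬ (∀ ω, Gamma Ω Z H₁ α ω ⊆ Gamma Ω Z H₂ α ω) ∧
      ¬ (∀ ω, Gamma Ω Z H₂ α ω ⊆ Gamma Ω Z H₁ α ω) := by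
  refine ⟨Fin 3, Bool, Bool, ⟨0⟩, ⟨false⟩, ⟨false⟩, Om, Zs, ⟨wA, Or.inl rfl⟩,
    ⟨fh, mem_univ _⟩, {0}, {0,1}, ⟨0, rfl⟩, ⟨0, Or.inl rfl⟩,
    fun x hx => Or.inl hx, al, main⟩
end
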